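/- The lattice of strong Weihrauch degrees is not distributive: there exist single-valued partial functions f, g, h : ⊆ 2^ω → 2^ω such that (f ⊞ g) ⊓ h ≰_sW (f ⊓ h) ⊞ (g ⊓ h). -/

import Mathlib

attribute [local instance] Classical.propDecidable

namespace StrongWeihrauch

noncomputable section

/-! ### Cantor space, monotone approximations, and the evaluation map -/

/-- Cantor space `2^ω`; we identify subsets of `ω` with their characteristic functions. -/
abbrev Cantor : Type := ℕ → Bool

/-- The coded triple `⟨n,s,i⟩`. -/
def tpl (n s i : ℕ) : ℕ := Nat.pair n (Nat.pair s i)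

/-- A monotone approximation (Definition 3.1): every element has the form `⟨n,s,i⟩` with
`i < 2`; for each `n` there is at most one pair `(s,i)` with `⟨n,s,i⟩ ∈ a`; and the stages `s`
are strictly increasing in `n`. -/
def MonotoneApprox (a : Cantor) : Prop :=
  (∀ k, a k = true → ∃ n s i, i < 2 ∧ k = tpl n s i) ∧
  (∀ n s t i j, a (tpl n s i) = true → a (tpl n t j) = true → s = t ∧ i = j) ∧
  (∀ m n s t i j, a (tpl m s i) = true → a (tpl n t j) = true → m < n → s < t)

/-- A total monotone approximation: every `n` gets a value. -/
def TotalMonotoneApprox (a : Cantor) : Prop :=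
  MonotoneApprox a ∧ ∀ n, ∃ s i, i < 2 ∧ a (tpl n s i) = true

/-- The value of the evaluation map `e` on a (total) monotone approximation:
`eVal a n = i` iff `⟨n,s,i⟩ ∈ a` for some `s`. -/
def eVal (a : Cantor) : Cantor := fun n => decide (∃ s, a (tpl n s 1) = true)

/-- The evaluation map `e : ⊆ 2^ω → 2^ω`, the partial function whose domain is the set of
total monotone approximations `a`, with `e(a)(n) = i` iff `⟨n,s,i⟩ ∈ a` for some `s`. -/
def evalMA : Cantor →. Cantor := fun a => ⟨TotalMonotoneApprox a, fun _ => eVal a⟩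

/-! ### Turing functionals -/

/-- The oracle information available at stage `s`: the first `s` bits of `p`. -/
def initSeg (p : Cantor) (s : ℕ) : List Bool := (List.range s).map p

/-- A `{0,1}`-valued Turing functional on Cantor space, presented by a computable monotone
finite-prefix approximation: `approx σ n = some b` means that the computation on input `n`
with oracle prefix `σ` has converged, with output `b`. -/
structure TuringFunctional where
  approx : List Bool → ℕ → Option Bool
  computable : Computable₂ approx
  mono : ∀ σ τ n b, σ <+: τ → approx σ n = some b → approx τ n = some b

namespace TuringFunctional

/-- `Φ^p(n)[s]↓`. -/
def ConvAt (Φ : TuringFunctional) (p : Cantor) (n s : ℕ) : Prop :=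
  (Φ.approx (initSeg p s) n).isSome = true

/-- `s` is least such that `Φ^p(n)[s]↓`. -/
def LeastStage (Φ : TuringFunctional) (p : Cantor) (n s : ℕ) : Prop :=
  Φ.ConvAt p n s ∧ ∀ t, t < s → ¬ Φ.ConvAt p n t

/-- Convention 2.1: if `Φ^p(n)[s]↓` then `Φ^p(m)[s]↓` for all `m < n`, and for each `s`
there is at most one `n` for which `s` is least with `Φ^p(n)[s]↓`. -/
def Convention (Φ : TuringFunctional) : Prop :=
  (∀ (p : Cantor) (s n m : ℕ), m < n → Φ.ConvAt p n s → Φ.ConvAt p m s) ∧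
  (∀ (p : Cantor) (s n n' : ℕ), Φ.LeastStage p n s → Φ.LeastStage p n' s → n = n')

/-- The partial function `⊆ 2^ω → 2^ω` computed by `Φ`; it is defined at `p` exactly when
`Φ(p)` is total, in which case its value is the map `n ↦ Φ^p(n)`. -/
def eval (Φ : TuringFunctional) : Cantor →. Cantor :=
  fun p => ⟨∀ n, ∃ s b, Φ.approx (initSeg p s) n = some b,
    fun h n => (h n).choose_spec.choose⟩

end TuringFunctional

/-- `a_{Φ(p)}`: the set of all `⟨n,s,i⟩` where `s` is least such that `Φ^p(n)[s]↓ = i`. -/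
def approxSeq (Φ : TuringFunctional) (p : Cantor) : Cantor := fun k =>
  decide (∃ n s b, k = tpl n s (Bool.toNat b) ∧ Φ.LeastStage p n s ∧
    Φ.approx (initSeg p s) n = some b)

/-- Turing reducibility `q ≤_T p` on Cantor space. -/
def TuringLe (q p : Cantor) : Prop := ∃ Φ : TuringFunctional, Φ.eval p = Part.some q

/-! ### Pairing on Cantor space -/

/-- The effective join `⟨p,q⟩` on Cantor space. -/
def pairC (p q : Cantor) : Cantor := fun n => if n % 2 = 0 then p (n / 2) else q (n / 2)

def leftC (r : Cantor) : Cantor := fun n => r (2 * n)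

def rightC (r : Cantor) : Cantor := fun n => r (2 * n + 1)

/-- The singleton `{i} ⊆ ω` as an element of Cantor space. -/
def natSet (i : ℕ) : Cantor := fun n => decide (n = i)

/-- `⟨i,p⟩`, i.e. `⟨{i},p⟩`. -/
def inC (i : ℕ) (p : Cantor) : Cantor := pairC (natSet i) p

lemma leftC_pairC (p q : Cantor) : leftC (pairC p q) = p := by
  funext n
  have h1 : 2 * n % 2 = 0 := by omega
  have h2 : 2 * n / 2 = n := by omega
  simp [leftC, pairC, h1, h2]

lemma rightC_pairC (p q : Cantor) : rightC (pairC p q) = q := by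
  funext n
  have h1 : (2 * n + 1) % 2 = 1 := by omega
  have h2 : (2 * n + 1) / 2 = n := by omega
  simp [rightC, pairC, h1, h2]

lemma tpl_inj {n s i n' s' i' : ℕ} (h : tpl n s i = tpl n' s' i') :
    n = n' ∧ s = s' ∧ i = i' := by
  unfold tpl at h
  rw [Nat.pair_eq_pair] at h
  rcases h with ⟨h1, h2⟩
  rw [Nat.pair_eq_pair] at h2
  exact ⟨h1, h2.1, h2.2⟩

lemma toNat_lt_two (b : Bool) : b.toNat < 2 := by cases b <;> decide

/-- Encoding of `q ∈ 2^ω` as a total monotone approximation evaluating to `q`. -/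
def maEncode (q : Cantor) : Cantor := fun k => decide (∃ n, k = tpl n n (q n).toNat)

lemma maEncode_mem {q : Cantor} {k : ℕ} :
    maEncode q k = true ↔ ∃ n, k = tpl n n (q n).toNat := by
  simp [maEncode]

lemma maEncode_total (q : Cantor) : TotalMonotoneApprox (maEncode q) := by
  refine ⟨⟨?_, ?_, ?_⟩, ?_⟩
  · intro k hk
    obtain ⟨n, rfl⟩ := maEncode_mem.mp hk
    exact ⟨n, n, (q n).toNat, toNat_lt_two _, rfl⟩
  · intro n s t i j h1 h2
    obtain ⟨m, hm⟩ := maEncode_mem.mp h1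
    obtain ⟨m', hm'⟩ := maEncode_mem.mp h2
    obtain ⟨e1, e2, e3⟩ := tpl_inj hm
    obtain ⟨f1, f2, f3⟩ := tpl_inj hm'
    have hmm' : m = m' := by omega
    refine ⟨by omega, by rw [e3, f3, hmm']⟩
  · intro m n s t i j h1 h2 hmn
    obtain ⟨u, hu⟩ := maEncode_mem.mp h1
    obtain ⟨v, hv⟩ := maEncode_mem.mp h2
    obtain ⟨e1, e2, _⟩ := tpl_inj hu
    obtain ⟨f1, f2, _⟩ := tpl_inj hv
    omega
  · intro n
    exact ⟨n, (q n).toNat, toNat_lt_two _, maEncode_mem.mpr ⟨n, rfl⟩⟩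

lemma eVal_maEncode (q : Cantor) : eVal (maEncode q) = q := by
  funext n
  have hiff : (∃ s, maEncode q (tpl n s 1) = true) ↔ q n = true := by
    constructor
    · rintro ⟨s, hs⟩
      obtain ⟨m, hm⟩ := maEncode_mem.mp hs
      obtain ⟨e1, e2, e3⟩ := tpl_inj hm
      subst e1
      cases hq : q n
      · rw [hq] at e3; simp at e3
      · rfl
    · intro hq
      refine ⟨n, maEncode_mem.mpr ⟨n, ?_⟩⟩
      rw [hq]
      rfl
  cases hq : q n
  · have hne : ¬ (∃ s, maEncode q (tpl n s 1) = true) := by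
      intro h
      have ht := hiff.mp h
      rw [ht] at hq
      exact Bool.noConfusion hq
    simp [eVal, hne]
  · simp [eVal, hiff.mpr hq]

/-- An explicit non-(monotone approximation). -/
def badMA : Cantor := fun k => decide (k = tpl 0 0 0 ∨ k = tpl 0 1 0)

lemma badMA_not : ¬ TotalMonotoneApprox badMA := by
  rintro ⟨⟨-, h2, -⟩, -⟩
  have ha : badMA (tpl 0 0 0) = true := by simp [badMA]
  have hb : badMA (tpl 0 1 0) = true := by simp [badMA]
  have := (h2 0 0 1 0 0 ha hb).1
  omega

/-! ### Represented spaces -/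

/-- A represented space: a set `X` together with a partial surjection `δ : ⊆ 2^ω → X`. -/
structure RepSp : Type 1 where
  X : Type
  δ : Cantor →. X
  surj : ∀ x : X, ∃ p, x ∈ δ p

namespace RepSp

/-- The product representation of `X₀ × X₁`: `δ(⟨p₀,p₁⟩) = (δ₀(p₀), δ₁(p₁))`. -/
def prod (A B : RepSp) : RepSp where
  X := A.X × B.X
  δ := fun r => (A.δ (leftC r)).bind fun x => (B.δ (rightC r)).map fun y => (x, y)
  surj := by
    rintro ⟨x, y⟩
    obtain ⟨p, hp⟩ := A.surj x
    obtain ⟨q, hq⟩ := B.surj y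
    refine ⟨pairC p q, ?_⟩
    simp only [leftC_pairC, rightC_pairC, Part.mem_bind_iff]
    exact ⟨x, hp, Part.mem_map _ hq⟩

/-- The disjoint-union representation of `X₀ ⊔ X₁`: `δ(⟨i,p⟩) = ⟨i, δᵢ(p)⟩`. -/
def sum (A B : RepSp) : RepSp where
  X := A.X ⊕ B.X
  δ := fun r =>
    if leftC r = natSet 0 then (A.δ (rightC r)).map Sum.inl
    else if leftC r = natSet 1 then (B.δ (rightC r)).map Sum.inr
    else Part.none
  surj := by
    rintro (x | y)
    · obtain ⟨p, hp⟩ := A.surj x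
      refine ⟨inC 0 p, ?_⟩
      have e1 : leftC (inC 0 p) = natSet 0 := leftC_pairC _ _
      have e2 : rightC (inC 0 p) = p := rightC_pairC _ _
      simp only [e1, e2, if_pos rfl]
      exact Part.mem_map _ hp
    · obtain ⟨p, hp⟩ := B.surj y
      refine ⟨inC 1 p, ?_⟩
      have e1 : leftC (inC 1 p) = natSet 1 := leftC_pairC _ _
      have e2 : rightC (inC 1 p) = p := rightC_pairC _ _
      have hne : natSet 1 ≠ natSet 0 := by
        intro h
        have := congrFun h 0
        simp [natSet] at this
      simp only [e1, e2, hne, if_neg, if_pos rfl, ite_false, ite_true]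
      exact Part.mem_map _ hp

/-- The completion `Ŷ = Y ∪ {∞_Y}` (with `∞_Y` rendered as `none`), represented by
`δ_Ŷ(p) = δ_Y(e(p))` if `p` is a total monotone approximation with `e(p) ∈ dom(δ_Y)`, and
`δ_Ŷ(p) = ∞_Y` otherwise. -/
def hat (A : RepSp) : RepSp where
  X := Option A.X
  δ := fun p => Part.some (((evalMA p).bind A.δ).toOption)
  surj := by
    intro y
    match y with
    | none =>
        refine ⟨badMA, ?_⟩
        rw [Part.mem_some_iff]
        have hd : ¬ ((evalMA badMA).bind A.δ).Dom := by
          rintro ⟨h1, -⟩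
          exact badMA_not h1
        rw [eq_comm, Part.toOption_eq_none_iff]
        exact hd
    | some x =>
        obtain ⟨p, hp⟩ := A.surj x
        refine ⟨maEncode p, ?_⟩
        rw [Part.mem_some_iff, eq_comm, Part.toOption_eq_some_iff]
        refine Part.mem_bind_iff.mpr ?_
        refine ⟨p, ?_, hp⟩
        exact ⟨maEncode_total p, eVal_maEncode p⟩

end RepSp

/-! ### Partial multifunctions and the Weihrauch reducibilities -/

/-- A partial multifunction `f : ⊆ X ⇉ Y` between represented spaces: `f.f x` is the set of
solutions of the instance `x`, and the domain of `f` is the set of `x` with `f.f x ≠ ∅`. -/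
structure MFn : Type 1 where
  A : RepSp
  B : RepSp
  f : A.X → Set B.X

namespace MFn

/-- The coproduct `f ⊔ g`. -/
def sqcup (f g : MFn) : MFn where
  A := f.A.sum g.A
  B := f.B.sum g.B
  f := Sum.elim (fun x => Sum.inl '' f.f x) (fun y => Sum.inr '' g.f y)

/-- The meet `f ⊓ g`, with `(f ⊓ g)(⟨x,y⟩) = ({0} × f(x)) ∪ ({1} × g(y))` for
`x ∈ dom f`, `y ∈ dom g`. -/
def sqcap (f g : MFn) : MFn where
  A := f.A.prod g.A
  B := f.B.sum g.B
  f := fun xy =>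
    if (f.f xy.1).Nonempty ∧ (g.f xy.2).Nonempty then
      (Sum.inl '' f.f xy.1) ∪ (Sum.inr '' g.f xy.2)
    else ∅

/-- The join `f ⊞ g : ⊆ X₀ ⊔ X₁ ⇉ Ŷ₀ × Ŷ₁`, with `(f ⊞ g)(⟨0,x⟩) = f(x) × Ŷ₁` and
`(f ⊞ g)(⟨1,x⟩) = Ŷ₀ × g(x)`. -/
def boxplus (f g : MFn) : MFn where
  A := f.A.sum g.A
  B := (f.B.hat).prod (g.B.hat)
  f := Sum.elim
    (fun x => (Option.some '' f.f x) ×ˢ (Set.univ : Set (Option g.B.X)))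
    (fun y => (Set.univ : Set (Option f.B.X)) ×ˢ (Option.some '' g.f y))

end MFn

/-- `F ⊢ f`: the partial function `F : ⊆ 2^ω → 2^ω` is a realizer of `f`, i.e.
`δ_Y F(p) ∈ f δ_X(p)` for every `p ∈ dom(f δ_X)`. -/
def Realizes (F : Cantor →. Cantor) (f : MFn) : Prop :=
  ∀ p x, x ∈ f.A.δ p → (f.f x).Nonempty →
    ∃ q ∈ F p, ∃ y ∈ f.B.δ q, y ∈ f.f x

/-- Composition of partial functions on Cantor space: `pcomp F G = F ∘ G`. -/
def pcomp (F G : Cantor →. Cantor) : Cantor →. Cantor := fun p => (G p).bind F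

/-- Strong Weihrauch reducibility: `f ≤_sW g` iff there are Turing functionals `Φ, Ψ` with
`Ψ G Φ ⊢ f` for every `G ⊢ g`. -/
def sWLe (f g : MFn) : Prop :=
  ∃ Φ Ψ : TuringFunctional, ∀ G : Cantor →. Cantor, Realizes G g →
    Realizes (pcomp Ψ.eval (pcomp G Φ.eval)) f

/-- Strong Weihrauch equivalence. -/
def sWEq (f g : MFn) : Prop := sWLe f g ∧ sWLe g f

/-- Weihrauch reducibility: `f ≤_W g` iff there are Turing functionals `Φ, Ψ` with
`Ψ⟨id, G Φ⟩ ⊢ f` for every `G ⊢ g`. -/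
def wLe (f g : MFn) : Prop :=
  ∃ Φ Ψ : TuringFunctional, ∀ G : Cantor →. Cantor, Realizes G g →
    Realizes (fun p => (pcomp G Φ.eval p).bind fun q => Ψ.eval (pairC p q)) f

/-- Weihrauch equivalence. -/
def wEq (f g : MFn) : Prop := wLe f g ∧ wLe g f

/-- Cantor space as a represented space, with the identity representation. -/
def CantorSp : RepSp where
  X := Cantor
  δ := fun p => Part.some p
  surj := fun p => ⟨p, Part.mem_some_iff.mpr rfl⟩

/-- A partial multifunction on Cantor space, viewed as a multifunction on represented
spaces via the identity representation. -/
def ofCantor (F : Cantor → Set Cantor) : MFn := ⟨CantorSp, CantorSp, F⟩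

/-! ### Further definitions used in the statements -/

/-- `c` is an index for the Turing functional `Ψ`. -/
def codesTF (c : Nat.Partrec.Code) (Ψ : TuringFunctional) : Prop :=
  ∀ (σ : List Bool) (n : ℕ),
    c.eval (Nat.pair (Encodable.encode σ) n) = Part.some (Encodable.encode (Ψ.approx σ n))

/-- The multifunction `h` of Lemma 4.4: `h(⟨0,p⟩)` consists of all pairs `⟨a,q⟩` where `a`
is a total monotone approximation with `e(a) ∈ F(p)`, and `h(⟨1,p⟩)` of all pairs `⟨q,a⟩`
where `a` is a total monotone approximation with `e(a) ∈ G(p)`. -/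
def hJoin (F G : Cantor → Set Cantor) : Cantor → Set Cantor := fun r =>
  {z | leftC r = natSet 0 ∧
    ∃ a q, z = pairC a q ∧ TotalMonotoneApprox a ∧ eVal a ∈ F (rightC r)} ∪
  {z | leftC r = natSet 1 ∧
    ∃ q a, z = pairC q a ∧ TotalMonotoneApprox a ∧ eVal a ∈ G (rightC r)}

/-- A single-valued partial function on Cantor space, viewed as a partial multifunction on
represented spaces (via the identity representation). -/
def pfnToM (F : Cantor →. Cantor) : MFn := ofCantor fun p => {q | q ∈ F p}

/-- The single-point partial function `{p} → {q}`. -/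
def singleFn (p q : Cantor) : MFn := ofCantor fun r => if r = p then {q} else ∅

/-- `A` is Medvedev reducible to `B`. -/
def MedvedevLe (A B : Set Cantor) : Prop :=
  ∃ Φ : TuringFunctional, ∀ p ∈ B, ∃ q ∈ Φ.eval p, q ∈ A

/-- The all-zero sequence `0^ω`. -/
def zeroSeq : Cantor := fun _ => false

/-- `d_A : A → {0^ω}`. -/
def dFn (A : Set Cantor) : MFn := ofCantor fun p => if p ∈ A then {zeroSeq} else ∅

/-- `A ⊔ B ⊆ 2^ω`: all `⟨i,p⟩` with `i < 2` and `p ∈ A` if `i = 0`, `p ∈ B` if `i = 1`. -/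
def setSum (A B : Set Cantor) : Set Cantor :=
  {r | ∃ p ∈ A, r = inC 0 p} ∪ {r | ∃ p ∈ B, r = inC 1 p}

/-- `A × B ⊆ 2^ω`: all pairs `⟨p,q⟩` with `p ∈ A` and `q ∈ B`. -/
def setProd (A B : Set Cantor) : Set Cantor := {r | ∃ p ∈ A, ∃ q ∈ B, r = pairC p q}

/-- `p` is a name of an instance of `f`. -/
def domName (f : MFn) (p : Cantor) : Prop := ∃ x ∈ f.A.δ p, (f.f x).Nonempty

/-- `q` is a name of a solution to the instance of `f` named by `p`. -/
def solName (f : MFn) (p q : Cantor) : Prop :=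
  ∃ x ∈ f.A.δ p, ∃ y ∈ f.B.δ q, y ∈ f.f x

/-- Strong computable reducibility `f ≤_sc g`: every name `p` of an instance of `f`
computes a name `p'` of an instance of `g` such that every name of a solution to the
latter computes a name of a solution to the former. -/
def scLe (f g : MFn) : Prop :=
  ∀ p, domName f p → ∃ p', TuringLe p' p ∧ domName g p' ∧
    ∀ q, solName g p' q → ∃ z, TuringLe z q ∧ solName f p z

/-- Strong computable equivalence. -/
def scEq (f g : MFn) : Prop := scLe f g ∧ scLe g f

/-! ### Auxiliary development for Theorem 4.5 -/

section Aux

/-- `pairC` reconstruction. -/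
lemma pairC_eta (r : Cantor) : pairC (leftC r) (rightC r) = r := by
  funext n
  rcases Nat.even_or_odd n with ⟨m, hm⟩ | ⟨m, hm⟩
  · have h1 : n % 2 = 0 := by omega
    have h2 : 2 * (n / 2) = n := by omega
    simp [pairC, leftC, h1, h2]
  · have h1 : n % 2 = 1 := by omega
    have h2 : 2 * (n / 2) + 1 = n := by omega
    simp [pairC, leftC, rightC, h1, h2]

lemma leftC_apply (r : Cantor) (n : ℕ) : leftC r n = r (2 * n) := rfl

lemma rightC_apply (r : Cantor) (n : ℕ) : rightC r n = r (2 * n + 1) := rfl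

lemma natSet_zero_ne_natSet_one : natSet 0 ≠ natSet 1 := by
  intro h
  have := congrFun h 0
  simp [natSet] at this

lemma natSet_apply_self (i : ℕ) : natSet i i = true := by simp [natSet]

lemma natSet_one_zero : natSet 1 0 = false := by simp [natSet]

lemma natSet_zero_zero : natSet 0 0 = true := by simp [natSet]

lemma decide_exists_nat_const (b : Bool) : decide (∃ _s : ℕ, b = true) = b := by
  cases b
  · simp
  · simp

lemma tpl_ge_left (n s i : ℕ) : n ≤ tpl n s i := Nat.left_le_pair _ _

lemma tpl_ge_stage (n s i : ℕ) : s ≤ tpl n s i :=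
  le_trans (Nat.left_le_pair s i) (Nat.right_le_pair _ _)

/-! #### initSeg lemmas -/

lemma initSeg_length (p : Cantor) (s : ℕ) : (initSeg p s).length = s := by
  simp [initSeg]

lemma initSeg_getElem (p : Cantor) {s i : ℕ} (h : i < s) :
    (initSeg p s)[i]'(by simpa [initSeg_length] using h) = p i := by
  simp [initSeg]

lemma initSeg_congr {p q : Cantor} {s : ℕ} (h : ∀ i < s, p i = q i) :
    initSeg p s = initSeg q s := by
  apply List.ext_getElem (by simp [initSeg_length])
  intro i h1 h2
  have hi : i < s := by simpa [initSeg_length] using h1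
  rw [initSeg_getElem p hi, initSeg_getElem q hi]
  exact h i hi

lemma initSeg_prefix (p : Cantor) {s t : ℕ} (h : s ≤ t) :
    initSeg p s <+: initSeg p t := by
  rw [List.prefix_iff_eq_take]
  apply List.ext_getElem
  · simp [initSeg_length, Nat.min_eq_left h]
  · intro i h1 h2
    have hi : i < s := by simpa [initSeg_length] using h1
    rw [initSeg_getElem p hi, List.getElem_take, initSeg_getElem p (lt_of_lt_of_le hi h)]

/-- `x` is a total extension of the finite condition `σ`. -/
def IsExt (σ : List Bool) (x : Cantor) : Prop := initSeg x σ.length = σ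

lemma isExt_initSeg (x : Cantor) (s : ℕ) : IsExt (initSeg x s) x := by
  unfold IsExt
  rw [initSeg_length]

lemma isExt_iff {σ : List Bool} {x : Cantor} :
    IsExt σ x ↔ ∀ i (h : i < σ.length), x i = σ[i]'h := by
  constructor
  · intro hx i hi
    have h1 : σ[i]'hi = (initSeg x σ.length)[i]'(by simpa [initSeg_length] using hi) :=
      List.getElem_of_eq hx.symm _
    rw [h1, initSeg_getElem x hi]
  · intro h
    apply List.ext_getElem (by simp [initSeg_length])
    intro i h1 h2
    have hi : i < σ.length := by simpa [initSeg_length] using h1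
    rw [initSeg_getElem x hi]
    exact h i hi

lemma IsExt.mono {σ τ : List Bool} {x : Cantor} (h : σ <+: τ) (hx : IsExt τ x) :
    IsExt σ x := by
  rw [isExt_iff] at *
  intro i hi
  rw [hx i (lt_of_lt_of_le hi h.length_le)]
  exact (h.getElem hi).symm

lemma IsExt.initSeg_eq {σ : List Bool} {x y : Cantor} (hx : IsExt σ x) (hy : IsExt σ y)
    {u : ℕ} (hu : u ≤ σ.length) : initSeg x u = initSeg y u := by
  rw [isExt_iff] at hx hy
  apply initSeg_congr
  intro i hi
  have hix : i < σ.length := lt_of_lt_of_le hi hu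
  rw [hx i hix, hy i hix]

/-! #### Turing functional evaluation lemmas -/

namespace TuringFunctional

lemma eval_mem_iff {Φ : TuringFunctional} {p q : Cantor} :
    q ∈ Φ.eval p ↔ ∃ h : (∀ n, ∃ s b, Φ.approx (initSeg p s) n = some b),
      (fun n => (h n).choose_spec.choose) = q := Part.mem_eq _ _ ▸ Iff.rfl

/-- Consistency: any converged value agrees with the value of the eval. -/
lemma eval_bit {Φ : TuringFunctional} {p q : Cantor} (hq : q ∈ Φ.eval p)
    {m u : ℕ} {b : Bool} (h : Φ.approx (initSeg p u) m = some b) : q m = b := by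
  obtain ⟨hd, hval⟩ := id hq
  have hqm : q m = (hd m).choose_spec.choose := by rw [← hval]; rfl
  have hb₀ : Φ.approx (initSeg p ((hd m).choose)) m = some ((hd m).choose_spec.choose) :=
    (hd m).choose_spec.choose_spec
  rcases le_total u ((hd m).choose) with hle | hle
  · have h2 := Φ.mono _ _ _ _ (initSeg_prefix p hle) h
    have := h2.symm.trans hb₀
    rw [hqm]
    exact (Option.some_injective _ this).symm
  · have h2 := Φ.mono _ _ _ _ (initSeg_prefix p hle) hb₀
    have := h2.symm.trans h
    rw [hqm]
    exact (Option.some_injective _ this)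

/-- Totality: from membership, obtain a converged stage for each input. -/
lemma eval_total {Φ : TuringFunctional} {p q : Cantor} (hq : q ∈ Φ.eval p) (m : ℕ) :
    ∃ u b, Φ.approx (initSeg p u) m = some b ∧ q m = b := by
  obtain ⟨hd, _⟩ := id hq
  obtain ⟨b, hb⟩ := (hd m).choose_spec
  exact ⟨(hd m).choose, b, hb, eval_bit hq hb⟩

end TuringFunctional

/-! #### Delayed monotone encodings -/

/-- Encoding of `x` as a total monotone approximation with all stages delayed by `N`. -/
def delayEnc (N : ℕ) (x : Cantor) : Cantor :=
  fun k => decide (∃ n, k = tpl n (n + N) (x n).toNat)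

lemma delayEnc_mem {N : ℕ} {x : Cantor} {k : ℕ} :
    delayEnc N x k = true ↔ ∃ n, k = tpl n (n + N) (x n).toNat := by
  simp [delayEnc]

lemma delayEnc_total (N : ℕ) (x : Cantor) : TotalMonotoneApprox (delayEnc N x) := by
  refine ⟨⟨?_, ?_, ?_⟩, ?_⟩
  · intro k hk
    obtain ⟨n, rfl⟩ := delayEnc_mem.mp hk
    exact ⟨n, n + N, (x n).toNat, toNat_lt_two _, rfl⟩
  · intro n s t i j h1 h2
    obtain ⟨m, hm⟩ := delayEnc_mem.mp h1
    obtain ⟨m', hm'⟩ := delayEnc_mem.mp h2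
    obtain ⟨e1, e2, e3⟩ := tpl_inj hm
    obtain ⟨f1, f2, f3⟩ := tpl_inj hm'
    have hmm' : m = m' := by omega
    refine ⟨by omega, by rw [e3, f3, hmm']⟩
  · intro m n s t i j h1 h2 hmn
    obtain ⟨u, hu⟩ := delayEnc_mem.mp h1
    obtain ⟨v, hv⟩ := delayEnc_mem.mp h2
    obtain ⟨e1, e2, _⟩ := tpl_inj hu
    obtain ⟨f1, f2, _⟩ := tpl_inj hv
    omega
  · intro n
    exact ⟨n + N, (x n).toNat, toNat_lt_two _, delayEnc_mem.mpr ⟨n, rfl⟩⟩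

lemma eVal_delayEnc (N : ℕ) (x : Cantor) : eVal (delayEnc N x) = x := by
  funext n
  have hiff : (∃ s, delayEnc N x (tpl n s 1) = true) ↔ x n = true := by
    constructor
    · rintro ⟨s, hs⟩
      obtain ⟨m, hm⟩ := delayEnc_mem.mp hs
      obtain ⟨e1, e2, e3⟩ := tpl_inj hm
      subst e1
      cases hx : x n
      · rw [hx] at e3; simp at e3
      · rfl
    · intro hx
      refine ⟨n + N, delayEnc_mem.mpr ⟨n, ?_⟩⟩
      rw [hx]
      rfl
  cases hx : x n
  · have hne : ¬ (∃ s, delayEnc N x (tpl n s 1) = true) := by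
      intro h
      have := hiff.mp h
      rw [this] at hx
      exact Bool.noConfusion hx
    simp [eVal, hne]
  · simp [eVal, hiff.mpr hx]

lemma delayEnc_eq_false_of_lt {N : ℕ} {x : Cantor} {k : ℕ} (h : k < N) :
    delayEnc N x k = false := by
  rw [← Bool.not_eq_true, delayEnc_mem]
  rintro ⟨n, rfl⟩
  have := tpl_ge_stage n (n + N) (x n).toNat
  omega

lemma delayEnc_congr {N : ℕ} {x y : Cantor} {k : ℕ} (h : ∀ j ≤ k, x j = y j) :
    delayEnc N x k = delayEnc N y k := by
  unfold delayEnc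
  congr 1
  apply propext
  constructor
  · rintro ⟨n, rfl⟩
    have hn : n ≤ tpl n (n + N) (x n).toNat := tpl_ge_left _ _ _
    exact ⟨n, by rw [← h n hn]⟩
  · rintro ⟨n, rfl⟩
    have hn : n ≤ tpl n (n + N) (y n).toNat := tpl_ge_left _ _ _
    exact ⟨n, by rw [h n hn]⟩

lemma initSeg_eq_iff {x y : Cantor} {u : ℕ} :
    initSeg x u = initSeg y u ↔ ∀ i < u, x i = y i := by
  constructor
  · intro h i hi
    have h1 : (initSeg x u)[i]'(by simpa [initSeg_length] using hi) =
        (initSeg y u)[i]'(by simpa [initSeg_length] using hi) := List.getElem_of_eq h _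
    rwa [initSeg_getElem x hi, initSeg_getElem y hi] at h1
  · exact initSeg_congr

/-! #### The three sample points -/

/-- The `B`-side answer at `rR1`. -/
def Zpt (B : Cantor) : Cantor := pairC zeroSeq (delayEnc 0 (inC 0 B))

/-- The delayed doubly-valid answer. -/
def Xpt (N : ℕ) (B C : Cantor) : Cantor :=
  pairC (delayEnc N (inC 1 C)) (delayEnc 0 (inC 0 B))

/-- The `A`-side answer at `rR0`. -/
def Wpt (A : Cantor) : Cantor := pairC (delayEnc 0 (inC 0 A)) zeroSeq

lemma inC_congr {i : ℕ} {x y : Cantor} {k : ℕ} (h : ∀ j ≤ k, x j = y j) :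
    ∀ j ≤ k, inC i x j = inC i y j := by
  intro j hj
  unfold inC pairC
  split
  · rfl
  · exact h (j / 2) (le_trans (Nat.div_le_self j 2) hj)

lemma delayEnc_inC_congr {N i : ℕ} {x y : Cantor} {k : ℕ} (h : ∀ j ≤ k, x j = y j) :
    delayEnc N (inC i x) k = delayEnc N (inC i y) k :=
  delayEnc_congr (inC_congr h)

lemma Zpt_bit_congr {B B' : Cantor} {k : ℕ} (h : ∀ j ≤ k, B j = B' j) :
    Zpt B k = Zpt B' k := by
  unfold Zpt pairC
  split
  · rfl
  · exact delayEnc_inC_congr (fun j hj => h j (le_trans hj (Nat.div_le_self k 2)))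

lemma Xpt_bit_congr {N : ℕ} {B B' C C' : Cantor} {k : ℕ}
    (hB : ∀ j ≤ k, B j = B' j) (hC : ∀ j ≤ k, C j = C' j) :
    Xpt N B C k = Xpt N B' C' k := by
  unfold Xpt pairC
  split
  · exact delayEnc_inC_congr (fun j hj => hC j (le_trans hj (Nat.div_le_self k 2)))
  · exact delayEnc_inC_congr (fun j hj => hB j (le_trans hj (Nat.div_le_self k 2)))

lemma Wpt_bit_congr {A A' : Cantor} {k : ℕ} (h : ∀ j ≤ k, A j = A' j) :
    Wpt A k = Wpt A' k := by
  unfold Wpt pairC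
  split
  · exact delayEnc_inC_congr (fun j hj => h j (le_trans hj (Nat.div_le_self k 2)))
  · rfl

/-! #### Codes for Turing functionals -/

/-- `c.eval` computes `Ψ.approx` (with respect to the standard encodings). -/
def CodesTF' (c : Nat.Partrec.Code) (Ψ : TuringFunctional) : Prop :=
  ∀ (σ : List Bool) (n : ℕ),
    c.eval (Encodable.encode ((σ, n) : List Bool × ℕ)) =
      Part.some (Encodable.encode (Ψ.approx σ n))

lemma exists_codesTF' (Ψ : TuringFunctional) : ∃ c, CodesTF' c Ψ := by
  have h := Ψ.computable
  unfold Computable₂ Computable Partrec at h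
  obtain ⟨c, hc⟩ := Nat.Partrec.Code.exists_code.1 h
  refine ⟨c, fun σ n => ?_⟩
  have h1 := congrFun hc (Encodable.encode ((σ, n) : List Bool × ℕ))
  rw [h1]
  simp [Encodable.encodek, Part.coe_some, Part.bind_some, Part.map_some]

/-- `c` converges on `(σ, m)` with output `some b`. -/
def AppEq (c : Nat.Partrec.Code) (σ : List Bool) (m : ℕ) (b : Bool) : Prop :=
  c.eval (Encodable.encode ((σ, m) : List Bool × ℕ)) =
    Part.some (Encodable.encode (some b : Option Bool))

lemma appEq_iff {c : Nat.Partrec.Code} {Ψ : TuringFunctional} (hc : CodesTF' c Ψ)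
    {σ : List Bool} {m : ℕ} {b : Bool} :
    AppEq c σ m b ↔ Ψ.approx σ m = some b := by
  unfold AppEq
  rw [hc]
  constructor
  · intro h
    have := Encodable.encode_injective (Part.some_injective h)
    exact this
  · intro h
    rw [h]

/-! #### The forcing step -/

/-- One forcing step: `σT` is the condition on the diagonalization target, `σU, σV` those
on the two sources; `π` builds the oracle from the sources, and the pattern bit `n` of the
extracted sequence is `decide (∃ s, q (ι n s) = true)`. -/
def forceStep (c : Nat.Partrec.Code) (π : Cantor → Cantor → Cantor) (ι : ℕ → ℕ → ℕ)
    (σT σU σV : List Bool) : List Bool × List Bool × List Bool :=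
  if hQ : ∃ x : Cantor × Cantor × ℕ × ℕ, IsExt σU x.1 ∧ IsExt σV x.2.1 ∧
      AppEq c (initSeg (π x.1 x.2.1) x.2.2.2) (ι σT.length x.2.2.1) true then
    (σT ++ [false],
      initSeg (Classical.choose hQ).1 (max σU.length (Classical.choose hQ).2.2.2),
      initSeg (Classical.choose hQ).2.1 (max σV.length (Classical.choose hQ).2.2.2))
  else (σT ++ [true], σU, σV)

lemma forceStep_prefix (c : Nat.Partrec.Code) (π : Cantor → Cantor → Cantor)
    (ι : ℕ → ℕ → ℕ) (σT σU σV : List Bool) :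
    σT <+: (forceStep c π ι σT σU σV).1 ∧ σU <+: (forceStep c π ι σT σU σV).2.1 ∧
      σV <+: (forceStep c π ι σT σU σV).2.2 := by
  unfold forceStep
  by_cases hQ : ∃ x : Cantor × Cantor × ℕ × ℕ, IsExt σU x.1 ∧ IsExt σV x.2.1 ∧
      AppEq c (initSeg (π x.1 x.2.1) x.2.2.2) (ι σT.length x.2.2.1) true
  · rw [dif_pos hQ]
    obtain ⟨h1, h2, _⟩ := Classical.choose_spec hQ
    refine ⟨List.prefix_append _ _, ?_, ?_⟩
    · conv_lhs => rw [← h1]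
      exact initSeg_prefix _ (le_max_left _ _)
    · conv_lhs => rw [← h2]
      exact initSeg_prefix _ (le_max_left _ _)
  · rw [dif_neg hQ]
    exact ⟨List.prefix_append _ _, List.prefix_rfl, List.prefix_rfl⟩

lemma forceStep_spec {c : Nat.Partrec.Code} {Ψ : TuringFunctional} (hc : CodesTF' c Ψ)
    {π : Cantor → Cantor → Cantor} {ι : ℕ → ℕ → ℕ}
    (hπ : ∀ (u : ℕ) (x x' y y' : Cantor), initSeg x u = initSeg x' u →
      initSeg y u = initSeg y' u → initSeg (π x y) u = initSeg (π x' y') u)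
    {σT σU σV : List Bool} {T U V : Cantor}
    (hT : IsExt (forceStep c π ι σT σU σV).1 T)
    (hU : IsExt (forceStep c π ι σT σU σV).2.1 U)
    (hV : IsExt (forceStep c π ι σT σU σV).2.2 V)
    {q : Cantor} (hq : q ∈ Ψ.eval (π U V)) :
    decide (∃ s, q (ι σT.length s) = true) ≠ T σT.length := by
  by_cases hQ : ∃ x : Cantor × Cantor × ℕ × ℕ, IsExt σU x.1 ∧ IsExt σV x.2.1 ∧
      AppEq c (initSeg (π x.1 x.2.1) x.2.2.2) (ι σT.length x.2.2.1) true
  · unfold forceStep at hT hU hV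
    rw [dif_pos hQ] at hT hU hV
    obtain ⟨h1, h2, h3⟩ := Classical.choose_spec hQ
    have hT' : IsExt (σT ++ [false]) T := hT
    have hU' : IsExt (initSeg (Classical.choose hQ).1
        (max σU.length (Classical.choose hQ).2.2.2)) U := hU
    have hV' : IsExt (initSeg (Classical.choose hQ).2.1
        (max σV.length (Classical.choose hQ).2.2.2)) V := hV
    have hTn : T σT.length = false := by
      have h0 := (isExt_iff.1 hT') σT.length (by simp)
      simpa using h0
    have hUu : initSeg U (Classical.choose hQ).2.2.2 =
        initSeg (Classical.choose hQ).1 (Classical.choose hQ).2.2.2 :=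
      IsExt.initSeg_eq hU' (isExt_initSeg _ _)
        (by rw [initSeg_length]; exact le_max_right _ _)
    have hVu : initSeg V (Classical.choose hQ).2.2.2 =
        initSeg (Classical.choose hQ).2.1 (Classical.choose hQ).2.2.2 :=
      IsExt.initSeg_eq hV' (isExt_initSeg _ _)
        (by rw [initSeg_length]; exact le_max_right _ _)
    have hπu := hπ (Classical.choose hQ).2.2.2 _ _ _ _ hUu hVu
    have happ : Ψ.approx (initSeg (π U V) (Classical.choose hQ).2.2.2)
        (ι σT.length (Classical.choose hQ).2.2.1) = some true := by
      rw [hπu]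
      exact (appEq_iff hc).1 h3
    have hbit := TuringFunctional.eval_bit hq happ
    have hdec : decide (∃ s', q (ι σT.length s') = true) = true := by
      simp only [decide_eq_true_eq]
      exact ⟨(Classical.choose hQ).2.2.1, hbit⟩
    rw [hdec, hTn]
    simp
  · unfold forceStep at hT hU hV
    rw [dif_neg hQ] at hT hU hV
    have hT' : IsExt (σT ++ [true]) T := hT
    have hTn : T σT.length = true := by
      have h0 := (isExt_iff.1 hT') σT.length (by simp)
      simpa using h0
    have hdec : decide (∃ s', q (ι σT.length s') = true) = false := by
      simp only [decide_eq_false_iff_not]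
      rintro ⟨s', hs'⟩
      obtain ⟨u, b, hub, hqb⟩ := TuringFunctional.eval_total hq (ι σT.length s')
      have hb : b = true := by rw [← hqb, hs']
      subst hb
      exact hQ ⟨⟨U, V, s', u⟩, hU, hV, (appEq_iff hc).2 hub⟩
    rw [hdec, hTn]
    simp

/-! #### The master construction -/

def iotaA (n s : ℕ) : ℕ := 4 * tpl n s 1 + 1
def iotaC (n _s : ℕ) : ℕ := 2 * n + 1
def iotaB (n s : ℕ) : ℕ := 4 * tpl n s 1 + 3

def pad (σ : List Bool) (m : ℕ) : List Bool := σ ++ List.replicate (m - σ.length) false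

lemma pad_prefix (σ : List Bool) (m : ℕ) : σ <+: pad σ m := List.prefix_append _ _

lemma pad_length (σ : List Bool) (m : ℕ) : m ≤ (pad σ m).length := by
  simp [pad]
  omega

/-- One stage of the construction, dispatching on the requirement coded by `k`. -/
def cstep (k : ℕ) (σ : List Bool × List Bool × List Bool) :
    List Bool × List Bool × List Bool :=
  let c := Denumerable.ofNat Nat.Partrec.Code (Nat.unpair k).1
  let κ := (Nat.unpair (Nat.unpair k).2).1
  let N := (Nat.unpair (Nat.unpair k).2).2
  let res : List Bool × List Bool × List Bool :=
    if κ = 0 then forceStep c (fun u _ => Zpt u) iotaA σ.1 σ.2.1 σ.2.2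
    else if κ = 1 then forceStep c (fun u v => Xpt N u v) iotaA σ.1 σ.2.1 σ.2.2
    else if κ = 2 then
      let o := forceStep c (fun u _ => Zpt u) iotaC σ.2.2 σ.2.1 σ.1
      (o.2.2, o.2.1, o.1)
    else if κ = 3 then
      let o := forceStep c (fun u _ => Wpt u) iotaB σ.2.1 σ.1 σ.2.2
      (o.2.1, o.1, o.2.2)
    else if κ = 4 then
      let o := forceStep c (fun u _ => Wpt u) iotaC σ.2.2 σ.1 σ.2.1
      (o.2.1, o.2.2, o.1)
    else σ
  (pad res.1 (k + 1), pad res.2.1 (k + 1), pad res.2.2 (k + 1))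

def cst : ℕ → List Bool × List Bool × List Bool
  | 0 => ([], [], [])
  | k + 1 => cstep k (cst k)

lemma cstep_prefix (k : ℕ) (σ : List Bool × List Bool × List Bool) :
    σ.1 <+: (cstep k σ).1 ∧ σ.2.1 <+: (cstep k σ).2.1 ∧ σ.2.2 <+: (cstep k σ).2.2 := by
  unfold cstep
  set c := Denumerable.ofNat Nat.Partrec.Code (Nat.unpair k).1
  set κ := (Nat.unpair (Nat.unpair k).2).1
  set N := (Nat.unpair (Nat.unpair k).2).2
  by_cases h0 : κ = 0
  · simp only [h0, if_true, if_pos]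
    obtain ⟨p1, p2, p3⟩ := forceStep_prefix c (fun u _ => Zpt u) iotaA σ.1 σ.2.1 σ.2.2
    exact ⟨p1.trans (pad_prefix _ _), p2.trans (pad_prefix _ _), p3.trans (pad_prefix _ _)⟩
  ·  by_cases h1 : κ = 1
     · simp only [h0, h1, if_false, if_true]
       obtain ⟨p1, p2, p3⟩ :=
         forceStep_prefix c (fun u v => Xpt N u v) iotaA σ.1 σ.2.1 σ.2.2
       exact ⟨p1.trans (pad_prefix _ _), p2.trans (pad_prefix _ _),
         p3.trans (pad_prefix _ _)⟩
     · by_cases h2 : κ = 2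
       · simp only [h0, h1, h2, if_false, if_true]
         obtain ⟨p1, p2, p3⟩ := forceStep_prefix c (fun u _ => Zpt u) iotaC σ.2.2 σ.2.1 σ.1
         exact ⟨p3.trans (pad_prefix _ _), p2.trans (pad_prefix _ _),
           p1.trans (pad_prefix _ _)⟩
       · by_cases h3 : κ = 3
         · simp only [h0, h1, h2, h3, if_false, if_true]
           obtain ⟨p1, p2, p3⟩ :=
             forceStep_prefix c (fun u _ => Wpt u) iotaB σ.2.1 σ.1 σ.2.2
           exact ⟨p2.trans (pad_prefix _ _), p1.trans (pad_prefix _ _),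
             p3.trans (pad_prefix _ _)⟩
         · by_cases h4 : κ = 4
           · simp only [h0, h1, h2, h3, h4, if_false, if_true]
             obtain ⟨p1, p2, p3⟩ :=
               forceStep_prefix c (fun u _ => Wpt u) iotaC σ.2.2 σ.1 σ.2.1
             exact ⟨p2.trans (pad_prefix _ _), p3.trans (pad_prefix _ _),
               p1.trans (pad_prefix _ _)⟩
           · simp only [h0, h1, h2, h3, h4, if_false]
             exact ⟨pad_prefix _ _, pad_prefix _ _, pad_prefix _ _⟩

lemma cst_mono {k l : ℕ} (h : k ≤ l) :
    (cst k).1 <+: (cst l).1 ∧ (cst k).2.1 <+: (cst l).2.1 ∧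
      (cst k).2.2 <+: (cst l).2.2 := by
  induction l with
  | zero =>
    have : k = 0 := by omega
    subst this
    exact ⟨List.prefix_rfl, List.prefix_rfl, List.prefix_rfl⟩
  | succ l ih =>
    rcases Nat.lt_or_ge k (l + 1) with hk | hk
    · have hkl : k ≤ l := by omega
      obtain ⟨i1, i2, i3⟩ := ih hkl
      obtain ⟨j1, j2, j3⟩ := cstep_prefix l (cst l)
      exact ⟨i1.trans j1, i2.trans j2, i3.trans j3⟩
    · have : k = l + 1 := by omega
      subst this
      exact ⟨List.prefix_rfl, List.prefix_rfl, List.prefix_rfl⟩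

lemma cst_length (k : ℕ) : k + 1 ≤ (cst (k + 1)).1.length ∧
    k + 1 ≤ (cst (k + 1)).2.1.length ∧ k + 1 ≤ (cst (k + 1)).2.2.length := by
  show k + 1 ≤ (cstep k (cst k)).1.length ∧ _ ∧ _
  unfold cstep
  exact ⟨pad_length _ _, pad_length _ _, pad_length _ _⟩

/-- The limit reals of the construction. -/
def limA : Cantor := fun n => (cst (n + 1)).1.getD n false
def limB : Cantor := fun n => (cst (n + 1)).2.1.getD n false
def limC : Cantor := fun n => (cst (n + 1)).2.2.getD n false

lemma getD_of_prefix {σ τ : List Bool} (h : σ <+: τ) {i : ℕ} (hi : i < σ.length) :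
    σ.getD i false = τ.getD i false := by
  rw [List.getD_eq_getElem _ _ hi,
    List.getD_eq_getElem _ _ (lt_of_lt_of_le hi h.length_le)]
  exact h.getElem hi

lemma limA_isExt (k : ℕ) : IsExt (cst k).1 limA := by
  rw [isExt_iff]
  intro i hi
  show (cst (i + 1)).1.getD i false = _
  rcases le_total (i + 1) k with h | h
  · rw [getD_of_prefix (cst_mono h).1 (lt_of_lt_of_le (Nat.lt_succ_self i) (cst_length i).1)]
    rw [List.getD_eq_getElem _ _ hi]
  · rw [← getD_of_prefix (cst_mono h).1 hi, List.getD_eq_getElem _ _ hi]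

lemma limB_isExt (k : ℕ) : IsExt (cst k).2.1 limB := by
  rw [isExt_iff]
  intro i hi
  show (cst (i + 1)).2.1.getD i false = _
  rcases le_total (i + 1) k with h | h
  · rw [getD_of_prefix (cst_mono h).2.1
      (lt_of_lt_of_le (Nat.lt_succ_self i) (cst_length i).2.1)]
    rw [List.getD_eq_getElem _ _ hi]
  · rw [← getD_of_prefix (cst_mono h).2.1 hi, List.getD_eq_getElem _ _ hi]

lemma limC_isExt (k : ℕ) : IsExt (cst k).2.2 limC := by
  rw [isExt_iff]
  intro i hi
  show (cst (i + 1)).2.2.getD i false = _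
  rcases le_total (i + 1) k with h | h
  · rw [getD_of_prefix (cst_mono h).2.2
      (lt_of_lt_of_le (Nat.lt_succ_self i) (cst_length i).2.2)]
    rw [List.getD_eq_getElem _ _ hi]
  · rw [← getD_of_prefix (cst_mono h).2.2 hi, List.getD_eq_getElem _ _ hi]

/-! #### Continuity of the builders -/

lemma cont_Z : ∀ (u : ℕ) (x x' y y' : Cantor), initSeg x u = initSeg x' u →
    initSeg y u = initSeg y' u →
    initSeg ((fun u _ => Zpt u) x y) u = initSeg ((fun u _ => Zpt u) x' y') u := by
  intro u x x' y y' hx _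
  apply initSeg_congr
  intro i hi
  exact Zpt_bit_congr fun j hj => initSeg_eq_iff.1 hx j (lt_of_le_of_lt hj hi)

lemma cont_X (N : ℕ) : ∀ (u : ℕ) (x x' y y' : Cantor), initSeg x u = initSeg x' u →
    initSeg y u = initSeg y' u →
    initSeg ((fun u v => Xpt N u v) x y) u = initSeg ((fun u v => Xpt N u v) x' y') u := by
  intro u x x' y y' hx hy
  apply initSeg_congr
  intro i hi
  exact Xpt_bit_congr (fun j hj => initSeg_eq_iff.1 hx j (lt_of_le_of_lt hj hi))
    (fun j hj => initSeg_eq_iff.1 hy j (lt_of_le_of_lt hj hi))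

lemma cont_W : ∀ (u : ℕ) (x x' y y' : Cantor), initSeg x u = initSeg x' u →
    initSeg y u = initSeg y' u →
    initSeg ((fun u _ => Wpt u) x y) u = initSeg ((fun u _ => Wpt u) x' y') u := by
  intro u x x' y y' hx _
  apply initSeg_congr
  intro i hi
  exact Wpt_bit_congr fun j hj => initSeg_eq_iff.1 hx j (lt_of_le_of_lt hj hi)

/-! #### Extraction patterns as `decide`s -/

lemma eVal_leftC_rightC (q : Cantor) (n : ℕ) :
    eVal (leftC (rightC q)) n = decide (∃ s, q (iotaA n s) = true) := by
  have hb : ∀ m, leftC (rightC q) m = q (4 * m + 1) := by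
    intro m
    rw [leftC_apply, rightC_apply]
    congr 1
    ring
  unfold eVal iotaA
  exact decide_eq_decide.mpr
    ⟨fun ⟨s, h⟩ => ⟨s, by rw [← hb]; exact h⟩, fun ⟨s, h⟩ => ⟨s, by rw [hb]; exact h⟩⟩

lemma eVal_rightC_rightC (q : Cantor) (n : ℕ) :
    eVal (rightC (rightC q)) n = decide (∃ s, q (iotaB n s) = true) := by
  have hb : ∀ m, rightC (rightC q) m = q (4 * m + 3) := by
    intro m
    rw [rightC_apply, rightC_apply]
    congr 1
    ring
  unfold eVal iotaB
  exact decide_eq_decide.mpr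
    ⟨fun ⟨s, h⟩ => ⟨s, by rw [← hb]; exact h⟩, fun ⟨s, h⟩ => ⟨s, by rw [hb]; exact h⟩⟩

lemma rightC_decide (q : Cantor) (n : ℕ) :
    rightC q n = decide (∃ s, q (iotaC n s) = true) := by
  rw [rightC_apply]
  exact (decide_exists_nat_const _).symm

/-! #### The five requirement families -/

lemma req_AZ (Ψ : TuringFunctional) :
    ∀ q ∈ Ψ.eval (Zpt limB), eVal (leftC (rightC q)) ≠ limA := by
  intro q hq hEq
  obtain ⟨c, hc⟩ := exists_codesTF' Ψ
  set k := Nat.pair (Encodable.encode c) (Nat.pair 0 0) with hk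
  set σ := cst k with hσ
  have hbranch : cst (k + 1) =
      (pad (forceStep c (fun u _ => Zpt u) iotaA σ.1 σ.2.1 σ.2.2).1 (k + 1),
       pad (forceStep c (fun u _ => Zpt u) iotaA σ.1 σ.2.1 σ.2.2).2.1 (k + 1),
       pad (forceStep c (fun u _ => Zpt u) iotaA σ.1 σ.2.1 σ.2.2).2.2 (k + 1)) := by
    show cstep k σ = _
    unfold cstep
    rw [hk]
    simp [Nat.unpair_pair, Denumerable.ofNat_encode]
  have hA : IsExt (forceStep c (fun u _ => Zpt u) iotaA σ.1 σ.2.1 σ.2.2).1 limA := by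
    have h := limA_isExt (k + 1)
    rw [hbranch] at h
    exact IsExt.mono (pad_prefix _ _) h
  have hB : IsExt (forceStep c (fun u _ => Zpt u) iotaA σ.1 σ.2.1 σ.2.2).2.1 limB := by
    have h := limB_isExt (k + 1)
    rw [hbranch] at h
    exact IsExt.mono (pad_prefix _ _) h
  have hC : IsExt (forceStep c (fun u _ => Zpt u) iotaA σ.1 σ.2.1 σ.2.2).2.2 limC := by
    have h := limC_isExt (k + 1)
    rw [hbranch] at h
    exact IsExt.mono (pad_prefix _ _) h
  have hspec := forceStep_spec hc cont_Z hA hB hC (q := q) hq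
  exact hspec ((eVal_leftC_rightC q _).symm.trans (congrFun hEq _))

lemma req_AX (Ψ : TuringFunctional) (N : ℕ) :
    ∀ q ∈ Ψ.eval (Xpt N limB limC), eVal (leftC (rightC q)) ≠ limA := by
  intro q hq hEq
  obtain ⟨c, hc⟩ := exists_codesTF' Ψ
  set k := Nat.pair (Encodable.encode c) (Nat.pair 1 N) with hk
  set σ := cst k with hσ
  have hbranch : cst (k + 1) =
      (pad (forceStep c (fun u v => Xpt N u v) iotaA σ.1 σ.2.1 σ.2.2).1 (k + 1),
       pad (forceStep c (fun u v => Xpt N u v) iotaA σ.1 σ.2.1 σ.2.2).2.1 (k + 1),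
       pad (forceStep c (fun u v => Xpt N u v) iotaA σ.1 σ.2.1 σ.2.2).2.2 (k + 1)) := by
    show cstep k σ = _
    unfold cstep
    rw [hk]
    simp [Nat.unpair_pair, Denumerable.ofNat_encode]
  have hA : IsExt (forceStep c (fun u v => Xpt N u v) iotaA σ.1 σ.2.1 σ.2.2).1 limA := by
    have h := limA_isExt (k + 1)
    rw [hbranch] at h
    exact IsExt.mono (pad_prefix _ _) h
  have hB : IsExt (forceStep c (fun u v => Xpt N u v) iotaA σ.1 σ.2.1 σ.2.2).2.1 limB := by
    have h := limB_isExt (k + 1)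
    rw [hbranch] at h
    exact IsExt.mono (pad_prefix _ _) h
  have hC : IsExt (forceStep c (fun u v => Xpt N u v) iotaA σ.1 σ.2.1 σ.2.2).2.2 limC := by
    have h := limC_isExt (k + 1)
    rw [hbranch] at h
    exact IsExt.mono (pad_prefix _ _) h
  have hspec := forceStep_spec hc (cont_X N) hA hB hC (q := q) hq
  exact hspec ((eVal_leftC_rightC q _).symm.trans (congrFun hEq _))

lemma req_CZ (Ψ : TuringFunctional) :
    ∀ q ∈ Ψ.eval (Zpt limB), rightC q ≠ limC := by
  intro q hq hEq
  obtain ⟨c, hc⟩ := exists_codesTF' Ψ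
  set k := Nat.pair (Encodable.encode c) (Nat.pair 2 0) with hk
  set σ := cst k with hσ
  have hbranch : cst (k + 1) =
      (pad (forceStep c (fun u _ => Zpt u) iotaC σ.2.2 σ.2.1 σ.1).2.2 (k + 1),
       pad (forceStep c (fun u _ => Zpt u) iotaC σ.2.2 σ.2.1 σ.1).2.1 (k + 1),
       pad (forceStep c (fun u _ => Zpt u) iotaC σ.2.2 σ.2.1 σ.1).1 (k + 1)) := by
    show cstep k σ = _
    unfold cstep
    rw [hk]
    simp [Nat.unpair_pair, Denumerable.ofNat_encode]
  have hT : IsExt (forceStep c (fun u _ => Zpt u) iotaC σ.2.2 σ.2.1 σ.1).1 limC := by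
    have h := limC_isExt (k + 1)
    rw [hbranch] at h
    exact IsExt.mono (pad_prefix _ _) h
  have hU : IsExt (forceStep c (fun u _ => Zpt u) iotaC σ.2.2 σ.2.1 σ.1).2.1 limB := by
    have h := limB_isExt (k + 1)
    rw [hbranch] at h
    exact IsExt.mono (pad_prefix _ _) h
  have hV : IsExt (forceStep c (fun u _ => Zpt u) iotaC σ.2.2 σ.2.1 σ.1).2.2 limA := by
    have h := limA_isExt (k + 1)
    rw [hbranch] at h
    exact IsExt.mono (pad_prefix _ _) h
  have hspec := forceStep_spec hc cont_Z hT hU hV (q := q) hq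
  exact hspec ((rightC_decide q _).symm.trans (congrFun hEq _))

lemma req_BW (Ψ : TuringFunctional) :
    ∀ q ∈ Ψ.eval (Wpt limA), eVal (rightC (rightC q)) ≠ limB := by
  intro q hq hEq
  obtain ⟨c, hc⟩ := exists_codesTF' Ψ
  set k := Nat.pair (Encodable.encode c) (Nat.pair 3 0) with hk
  set σ := cst k with hσ
  have hbranch : cst (k + 1) =
      (pad (forceStep c (fun u _ => Wpt u) iotaB σ.2.1 σ.1 σ.2.2).2.1 (k + 1),
       pad (forceStep c (fun u _ => Wpt u) iotaB σ.2.1 σ.1 σ.2.2).1 (k + 1),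
       pad (forceStep c (fun u _ => Wpt u) iotaB σ.2.1 σ.1 σ.2.2).2.2 (k + 1)) := by
    show cstep k σ = _
    unfold cstep
    rw [hk]
    simp [Nat.unpair_pair, Denumerable.ofNat_encode]
  have hT : IsExt (forceStep c (fun u _ => Wpt u) iotaB σ.2.1 σ.1 σ.2.2).1 limB := by
    have h := limB_isExt (k + 1)
    rw [hbranch] at h
    exact IsExt.mono (pad_prefix _ _) h
  have hU : IsExt (forceStep c (fun u _ => Wpt u) iotaB σ.2.1 σ.1 σ.2.2).2.1 limA := by
    have h := limA_isExt (k + 1)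
    rw [hbranch] at h
    exact IsExt.mono (pad_prefix _ _) h
  have hV : IsExt (forceStep c (fun u _ => Wpt u) iotaB σ.2.1 σ.1 σ.2.2).2.2 limC := by
    have h := limC_isExt (k + 1)
    rw [hbranch] at h
    exact IsExt.mono (pad_prefix _ _) h
  have hspec := forceStep_spec hc cont_W hT hU hV (q := q) hq
  exact hspec ((eVal_rightC_rightC q _).symm.trans (congrFun hEq _))

lemma req_CW (Ψ : TuringFunctional) :
    ∀ q ∈ Ψ.eval (Wpt limA), rightC q ≠ limC := by
  intro q hq hEq
  obtain ⟨c, hc⟩ := exists_codesTF' Ψ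
  set k := Nat.pair (Encodable.encode c) (Nat.pair 4 0) with hk
  set σ := cst k with hσ
  have hbranch : cst (k + 1) =
      (pad (forceStep c (fun u _ => Wpt u) iotaC σ.2.2 σ.1 σ.2.1).2.1 (k + 1),
       pad (forceStep c (fun u _ => Wpt u) iotaC σ.2.2 σ.1 σ.2.1).2.2 (k + 1),
       pad (forceStep c (fun u _ => Wpt u) iotaC σ.2.2 σ.1 σ.2.1).1 (k + 1)) := by
    show cstep k σ = _
    unfold cstep
    rw [hk]
    simp [Nat.unpair_pair, Denumerable.ofNat_encode]
  have hT : IsExt (forceStep c (fun u _ => Wpt u) iotaC σ.2.2 σ.1 σ.2.1).1 limC := by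
    have h := limC_isExt (k + 1)
    rw [hbranch] at h
    exact IsExt.mono (pad_prefix _ _) h
  have hU : IsExt (forceStep c (fun u _ => Wpt u) iotaC σ.2.2 σ.1 σ.2.1).2.1 limA := by
    have h := limA_isExt (k + 1)
    rw [hbranch] at h
    exact IsExt.mono (pad_prefix _ _) h
  have hV : IsExt (forceStep c (fun u _ => Wpt u) iotaC σ.2.2 σ.1 σ.2.1).2.2 limB := by
    have h := limB_isExt (k + 1)
    rw [hbranch] at h
    exact IsExt.mono (pad_prefix _ _) h
  have hspec := forceStep_spec hc cont_W hT hU hV (q := q) hq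
  exact hspec ((rightC_decide q _).symm.trans (congrFun hEq _))

/-! #### The scenario -/

/-- The single-point partial function `{0^ω} → {v}`. -/
def constPfn (v : Cantor) : Cantor →. Cantor := fun p => ⟨p = zeroSeq, fun _ => v⟩

lemma mem_constPfn {v p q : Cantor} : q ∈ constPfn v p ↔ p = zeroSeq ∧ q = v := by
  constructor
  · rintro ⟨h1, h2⟩
    exact ⟨h1, h2.symm⟩
  · rintro ⟨h1, h2⟩
    exact ⟨h1, h2.symm⟩

/-- `F : {0^ω} → {A}`. -/
def Ff : Cantor →. Cantor := constPfn limA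
/-- `G : {0^ω} → {B}`. -/
def Gg : Cantor →. Cantor := constPfn limB
/-- `H : {0^ω} → {C}`. -/
def Hh : Cantor →. Cantor := constPfn limC

lemma mem_Ff {p q : Cantor} : q ∈ Ff p ↔ p = zeroSeq ∧ q = limA := mem_constPfn

lemma mem_Gg {p q : Cantor} : q ∈ Gg p ↔ p = zeroSeq ∧ q = limB := mem_constPfn

lemma mem_Hh {p q : Cantor} : q ∈ Hh p ↔ p = zeroSeq ∧ q = limC := mem_constPfn

/-- The left-hand side `(f ⊞ g) ⊓ h`. -/
def Lmfn : MFn := ((pfnToM Ff).boxplus (pfnToM Gg)).sqcap (pfnToM Hh)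
/-- The right-hand side `(f ⊓ h) ⊞ (g ⊓ h)`. -/
def Rmfn : MFn := ((pfnToM Ff).sqcap (pfnToM Hh)).boxplus ((pfnToM Gg).sqcap (pfnToM Hh))

/-- Names of the two instances of `Lmfn`. -/
def pL0 : Cantor := pairC (inC 0 zeroSeq) zeroSeq
def pL1 : Cantor := pairC (inC 1 zeroSeq) zeroSeq
/-- Names of the two instances of `Rmfn`. -/
def rR0 : Cantor := inC 0 zeroSeq
def rR1 : Cantor := inC 1 zeroSeq

lemma pairC_zeroSeq : pairC zeroSeq zeroSeq = zeroSeq := by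
  funext n
  simp [pairC, zeroSeq]

/-! Membership of the instance names. -/

lemma sumδ_inC0 (x : Cantor) :
    (RepSp.sum CantorSp CantorSp).δ (inC 0 x) = Part.some (Sum.inl x) := by
  show (if leftC (inC 0 x) = natSet 0 then _ else _) = _
  erw [show leftC (inC 0 x) = natSet 0 from leftC_pairC _ _, if_pos rfl,
    show rightC (inC 0 x) = x from rightC_pairC _ _]
  exact Part.map_some _ _

lemma sumδ_inC1 (x : Cantor) :
    (RepSp.sum CantorSp CantorSp).δ (inC 1 x) = Part.some (Sum.inr x) := by
  show (if leftC (inC 1 x) = natSet 0 then _ else if leftC (inC 1 x) = natSet 1 then _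
    else _) = _
  erw [show leftC (inC 1 x) = natSet 1 from leftC_pairC _ _,
    if_neg (Ne.symm natSet_zero_ne_natSet_one), if_pos rfl,
    show rightC (inC 1 x) = x from rightC_pairC _ _]
  exact Part.map_some _ _

lemma name_L0 : ((Sum.inl zeroSeq : Cantor ⊕ Cantor), zeroSeq) ∈ Lmfn.A.δ pL0 := by
  show _ ∈ ((RepSp.sum CantorSp CantorSp).δ (leftC pL0)).bind
    fun x => (Part.some (rightC pL0)).map fun y => (x, y)
  erw [show leftC pL0 = inC 0 zeroSeq from leftC_pairC _ _,
    show rightC pL0 = zeroSeq from rightC_pairC _ _, sumδ_inC0, Part.bind_some,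
    Part.map_some]
  exact Part.mem_some _

lemma name_L1 : ((Sum.inr zeroSeq : Cantor ⊕ Cantor), zeroSeq) ∈ Lmfn.A.δ pL1 := by
  show _ ∈ ((RepSp.sum CantorSp CantorSp).δ (leftC pL1)).bind
    fun x => (Part.some (rightC pL1)).map fun y => (x, y)
  erw [show leftC pL1 = inC 1 zeroSeq from leftC_pairC _ _,
    show rightC pL1 = zeroSeq from rightC_pairC _ _, sumδ_inC1, Part.bind_some,
    Part.map_some]
  exact Part.mem_some _

lemma guard_L0 : ((((pfnToM Ff).boxplus (pfnToM Gg)).f (Sum.inl zeroSeq)).Nonempty ∧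
    ((pfnToM Hh).f zeroSeq).Nonempty) := by
  constructor
  · exact ⟨(some limA, none), ⟨limA, mem_Ff.mpr ⟨rfl, rfl⟩, rfl⟩, trivial⟩
  · exact ⟨limC, mem_Hh.mpr ⟨rfl, rfl⟩⟩

lemma guard_L1 : ((((pfnToM Ff).boxplus (pfnToM Gg)).f (Sum.inr zeroSeq)).Nonempty ∧
    ((pfnToM Hh).f zeroSeq).Nonempty) := by
  constructor
  · exact ⟨(none, some limB), trivial, ⟨limB, mem_Gg.mpr ⟨rfl, rfl⟩, rfl⟩⟩
  · exact ⟨limC, mem_Hh.mpr ⟨rfl, rfl⟩⟩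

lemma Lf_L0 : Lmfn.f ((Sum.inl zeroSeq : Cantor ⊕ Cantor), zeroSeq) =
    Sum.inl '' (((pfnToM Ff).boxplus (pfnToM Gg)).f (Sum.inl zeroSeq)) ∪
      Sum.inr '' ((pfnToM Hh).f zeroSeq) := by
  show (if _ then _ else _) = _
  erw [if_pos guard_L0]
  rfl

lemma Lf_L1 : Lmfn.f ((Sum.inr zeroSeq : Cantor ⊕ Cantor), zeroSeq) =
    Sum.inl '' (((pfnToM Ff).boxplus (pfnToM Gg)).f (Sum.inr zeroSeq)) ∪
      Sum.inr '' ((pfnToM Hh).f zeroSeq) := by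
  show (if _ then _ else _) = _
  erw [if_pos guard_L1]
  rfl

lemma ne_L0 : (Lmfn.f ((Sum.inl zeroSeq : Cantor ⊕ Cantor), zeroSeq)).Nonempty := by
  rw [Lf_L0]
  exact ⟨Sum.inr limC, Or.inr ⟨limC, mem_Hh.mpr ⟨rfl, rfl⟩, rfl⟩⟩

lemma ne_L1 : (Lmfn.f ((Sum.inr zeroSeq : Cantor ⊕ Cantor), zeroSeq)).Nonempty := by
  rw [Lf_L1]
  exact ⟨Sum.inr limC, Or.inr ⟨limC, mem_Hh.mpr ⟨rfl, rfl⟩, rfl⟩⟩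

/-! The representation of `Rmfn`'s solution space. -/

lemma Rδ (w : Cantor) : Rmfn.B.δ w = Part.some
    (((evalMA (leftC w)).bind (RepSp.sum CantorSp CantorSp).δ).toOption,
     ((evalMA (rightC w)).bind (RepSp.sum CantorSp CantorSp).δ).toOption) := by
  show (Part.some _).bind (fun x => (Part.some _).map fun y => (x, y)) = _
  erw [Part.bind_some, Part.map_some]
  rfl

lemma toOption_delay_inC0 (N : ℕ) (x : Cantor) :
    ((evalMA (delayEnc N (inC 0 x))).bind
      (RepSp.sum CantorSp CantorSp).δ).toOption = some (Sum.inl x) := by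
  erw [Part.toOption_eq_some_iff, Part.mem_bind_iff]
  refine ⟨inC 0 x, ⟨delayEnc_total N _, eVal_delayEnc N _⟩, ?_⟩
  rw [sumδ_inC0]
  exact Part.mem_some _

lemma toOption_delay_inC1 (N : ℕ) (x : Cantor) :
    ((evalMA (delayEnc N (inC 1 x))).bind
      (RepSp.sum CantorSp CantorSp).δ).toOption = some (Sum.inr x) := by
  erw [Part.toOption_eq_some_iff, Part.mem_bind_iff]
  refine ⟨inC 1 x, ⟨delayEnc_total N _, eVal_delayEnc N _⟩, ?_⟩
  rw [sumδ_inC1]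
  exact Part.mem_some _

lemma guard_FH : (((pfnToM Ff).f zeroSeq).Nonempty ∧ ((pfnToM Hh).f zeroSeq).Nonempty) :=
  ⟨⟨limA, mem_Ff.mpr ⟨rfl, rfl⟩⟩, ⟨limC, mem_Hh.mpr ⟨rfl, rfl⟩⟩⟩

lemma guard_GH : (((pfnToM Gg).f zeroSeq).Nonempty ∧ ((pfnToM Hh).f zeroSeq).Nonempty) :=
  ⟨⟨limB, mem_Gg.mpr ⟨rfl, rfl⟩⟩, ⟨limC, mem_Hh.mpr ⟨rfl, rfl⟩⟩⟩

lemma sqcapFH_f : ((pfnToM Ff).sqcap (pfnToM Hh)).f (zeroSeq, zeroSeq) =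
    Sum.inl '' ((pfnToM Ff).f zeroSeq) ∪ Sum.inr '' ((pfnToM Hh).f zeroSeq) := by
  show (if _ then _ else _) = _
  erw [if_pos guard_FH]
  rfl

lemma sqcapGH_f : ((pfnToM Gg).sqcap (pfnToM Hh)).f (zeroSeq, zeroSeq) =
    Sum.inl '' ((pfnToM Gg).f zeroSeq) ∪ Sum.inr '' ((pfnToM Hh).f zeroSeq) := by
  show (if _ then _ else _) = _
  erw [if_pos guard_GH]
  rfl

/-- The `A`-answer `Wpt limA` is a valid solution name at `rR0`. -/
lemma valid_W : ∃ y ∈ Rmfn.B.δ (Wpt limA),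
    y ∈ Rmfn.f (Sum.inl ((zeroSeq : Cantor), (zeroSeq : Cantor))) := by
  refine ⟨_, by rw [Rδ]; exact Part.mem_some _, ?_⟩
  show _ ∈ (some '' (((pfnToM Ff).sqcap (pfnToM Hh)).f (zeroSeq, zeroSeq))) ×ˢ Set.univ
  constructor
  · show ((evalMA (leftC (Wpt limA))).bind (RepSp.sum CantorSp CantorSp).δ).toOption ∈ _
    rw [show leftC (Wpt limA) = delayEnc 0 (inC 0 limA) from leftC_pairC _ _,
      toOption_delay_inC0]
    rw [sqcapFH_f]
    exact ⟨Sum.inl limA, Or.inl ⟨limA, mem_Ff.mpr ⟨rfl, rfl⟩, rfl⟩, rfl⟩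
  · trivial

/-- The delayed `C`-answer `Xpt N limB limC` is a valid solution name at `rR0`. -/
lemma valid_X (N : ℕ) : ∃ y ∈ Rmfn.B.δ (Xpt N limB limC),
    y ∈ Rmfn.f (Sum.inl ((zeroSeq : Cantor), (zeroSeq : Cantor))) := by
  refine ⟨_, by rw [Rδ]; exact Part.mem_some _, ?_⟩
  show _ ∈ (some '' (((pfnToM Ff).sqcap (pfnToM Hh)).f (zeroSeq, zeroSeq))) ×ˢ Set.univ
  constructor
  · show ((evalMA (leftC (Xpt N limB limC))).bind
      (RepSp.sum CantorSp CantorSp).δ).toOption ∈ _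
    rw [show leftC (Xpt N limB limC) = delayEnc N (inC 1 limC) from leftC_pairC _ _,
      toOption_delay_inC1]
    rw [sqcapFH_f]
    exact ⟨Sum.inr limC, Or.inr ⟨limC, mem_Hh.mpr ⟨rfl, rfl⟩, rfl⟩, rfl⟩
  · trivial

/-- The `B`-answer `Zpt limB` is a valid solution name at `rR1`. -/
lemma valid_Z : ∃ y ∈ Rmfn.B.δ (Zpt limB),
    y ∈ Rmfn.f (Sum.inr ((zeroSeq : Cantor), (zeroSeq : Cantor))) := by
  refine ⟨_, by rw [Rδ]; exact Part.mem_some _, ?_⟩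
  show _ ∈ Set.univ ×ˢ (some '' (((pfnToM Gg).sqcap (pfnToM Hh)).f (zeroSeq, zeroSeq)))
  constructor
  · trivial
  · show ((evalMA (rightC (Zpt limB))).bind (RepSp.sum CantorSp CantorSp).δ).toOption ∈ _
    rw [show rightC (Zpt limB) = delayEnc 0 (inC 0 limB) from rightC_pairC _ _,
      toOption_delay_inC0]
    rw [sqcapGH_f]
    exact ⟨Sum.inl limB, Or.inl ⟨limB, mem_Gg.mpr ⟨rfl, rfl⟩, rfl⟩, rfl⟩

/-- The adversary realizer answering `w0` at `rR0` and `w1` at `rR1`. -/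
def Gadv (w0 w1 : Cantor) : Cantor →. Cantor := fun r =>
  if r = rR0 then Part.some w0 else if r = rR1 then Part.some w1 else Part.none

lemma realizes_Gadv {w0 w1 : Cantor}
    (h0 : ∃ y ∈ Rmfn.B.δ w0, y ∈ Rmfn.f (Sum.inl ((zeroSeq : Cantor), (zeroSeq : Cantor))))
    (h1 : ∃ y ∈ Rmfn.B.δ w1, y ∈ Rmfn.f (Sum.inr ((zeroSeq : Cantor), (zeroSeq : Cantor)))) :
    Realizes (Gadv w0 w1) Rmfn := by
  intro p x hx hne
  have hδ : x ∈ (if leftC p = natSet 0 then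
      (((RepSp.prod CantorSp CantorSp).δ (rightC p)).map Sum.inl :
        Part ((Cantor × Cantor) ⊕ (Cantor × Cantor)))
    else if leftC p = natSet 1 then
      (((RepSp.prod CantorSp CantorSp).δ (rightC p)).map Sum.inr)
    else Part.none) := hx
  by_cases hp0 : leftC p = natSet 0
  · rw [if_pos hp0] at hδ
    obtain ⟨x', hx', rfl⟩ := (Part.mem_map_iff _).mp hδ
    have hx'' : x' ∈ (Part.some (leftC (rightC p))).bind
        (fun a => (Part.some (rightC (rightC p))).map fun b => (a, b)) := hx'
    rw [Part.bind_some, Part.map_some, Part.mem_some_iff] at hx''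
    subst hx''
    -- the instance must be the pair of zero sequences
    obtain ⟨y0, hy0⟩ := hne
    have hy0' : y0 ∈ (some '' (((pfnToM Ff).sqcap (pfnToM Hh)).f
        (leftC (rightC p), rightC (rightC p)))) ×ˢ Set.univ := hy0
    obtain ⟨ho, -⟩ := Set.mem_prod.mp hy0'
    obtain ⟨v, hv, -⟩ := ho
    have hvne : (((pfnToM Ff).sqcap (pfnToM Hh)).f
        (leftC (rightC p), rightC (rightC p))).Nonempty := ⟨v, hv⟩
    have hguard : (((pfnToM Ff).f (leftC (rightC p))).Nonempty ∧
        ((pfnToM Hh).f (rightC (rightC p))).Nonempty) := by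
      by_contra hg
      have : ((pfnToM Ff).sqcap (pfnToM Hh)).f (leftC (rightC p), rightC (rightC p)) =
          ∅ := by
        show (if _ then _ else _) = _
        erw [if_neg hg]
        rfl
      rw [this] at hvne
      exact Set.not_nonempty_empty hvne
    obtain ⟨⟨qf, hqf⟩, ⟨qh, hqh⟩⟩ := hguard
    have hz1 : leftC (rightC p) = zeroSeq := (mem_Ff.mp hqf).1
    have hz2 : rightC (rightC p) = zeroSeq := (mem_Hh.mp hqh).1
    have hp : p = rR0 := by
      have : p = pairC (leftC p) (rightC p) := (pairC_eta p).symm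
      rw [this, hp0]
      have : rightC p = pairC (leftC (rightC p)) (rightC (rightC p)) :=
        (pairC_eta (rightC p)).symm
      rw [this, hz1, hz2, pairC_zeroSeq]
      rfl
    subst hp
    refine ⟨w0, ?_, ?_⟩
    · show w0 ∈ (if rR0 = rR0 then Part.some w0 else _)
      rw [if_pos rfl]
      exact Part.mem_some _
    · rw [hz1, hz2]
      exact h0
  · rw [if_neg hp0] at hδ
    by_cases hp1 : leftC p = natSet 1
    · rw [if_pos hp1] at hδ
      obtain ⟨x', hx', rfl⟩ := (Part.mem_map_iff _).mp hδ
      have hx'' : x' ∈ (Part.some (leftC (rightC p))).bind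
          (fun a => (Part.some (rightC (rightC p))).map fun b => (a, b)) := hx'
      rw [Part.bind_some, Part.map_some, Part.mem_some_iff] at hx''
      subst hx''
      obtain ⟨y0, hy0⟩ := hne
      have hy0' : y0 ∈ Set.univ ×ˢ (some '' (((pfnToM Gg).sqcap (pfnToM Hh)).f
          (leftC (rightC p), rightC (rightC p)))) := hy0
      obtain ⟨-, ho⟩ := Set.mem_prod.mp hy0'
      obtain ⟨v, hv, -⟩ := ho
      have hvne : (((pfnToM Gg).sqcap (pfnToM Hh)).f
          (leftC (rightC p), rightC (rightC p))).Nonempty := ⟨v, hv⟩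
      have hguard : (((pfnToM Gg).f (leftC (rightC p))).Nonempty ∧
          ((pfnToM Hh).f (rightC (rightC p))).Nonempty) := by
        by_contra hg
        have : ((pfnToM Gg).sqcap (pfnToM Hh)).f (leftC (rightC p), rightC (rightC p)) =
            ∅ := by
          show (if _ then _ else _) = _
          erw [if_neg hg]
          rfl
        rw [this] at hvne
        exact Set.not_nonempty_empty hvne
      obtain ⟨⟨qg, hqg⟩, ⟨qh, hqh⟩⟩ := hguard
      have hz1 : leftC (rightC p) = zeroSeq := (mem_Gg.mp hqg).1
      have hz2 : rightC (rightC p) = zeroSeq := (mem_Hh.mp hqh).1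
      have hp : p = rR1 := by
        have : p = pairC (leftC p) (rightC p) := (pairC_eta p).symm
        rw [this, hp1]
        have : rightC p = pairC (leftC (rightC p)) (rightC (rightC p)) :=
          (pairC_eta (rightC p)).symm
        rw [this, hz1, hz2, pairC_zeroSeq]
        rfl
      subst hp
      have hne01 : rR1 ≠ rR0 := by
        intro h
        have := congrFun h 0
        simp [rR0, rR1, inC, pairC, natSet] at this
      refine ⟨w1, ?_, ?_⟩
      · show w1 ∈ (if rR1 = rR0 then _ else if rR1 = rR1 then Part.some w1 else _)
        rw [if_neg hne01, if_pos rfl]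
        exact Part.mem_some _
      · rw [hz1, hz2]
        exact h1
    · rw [if_neg hp1] at hδ
      exact absurd hδ (Part.notMem_none _)

/-! #### Tag analysis of solution names for `Lmfn` -/

lemma hatprodδ (r : Cantor) :
    ((RepSp.hat CantorSp).prod (RepSp.hat CantorSp)).δ r = Part.some
      (((evalMA (leftC r)).bind CantorSp.δ).toOption,
        ((evalMA (rightC r)).bind CantorSp.δ).toOption) := by
  show (Part.some _).bind (fun x => (Part.some _).map fun y => (x, y)) = _
  erw [Part.bind_some, Part.map_some]
  rfl

lemma tag_L0 {z : Cantor} {y : (Option Cantor × Option Cantor) ⊕ Cantor}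
    (hyδ : y ∈ Lmfn.B.δ z)
    (hyf : y ∈ Lmfn.f ((Sum.inl zeroSeq : Cantor ⊕ Cantor), zeroSeq)) :
    (leftC z = natSet 0 ∧ eVal (leftC (rightC z)) = limA) ∨
      (leftC z = natSet 1 ∧ rightC z = limC) := by
  have hδ : y ∈ (if leftC z = natSet 0 then
      ((((RepSp.hat CantorSp).prod (RepSp.hat CantorSp)).δ (rightC z)).map Sum.inl :
        Part ((Option Cantor × Option Cantor) ⊕ Cantor))
    else if leftC z = natSet 1 then ((Part.some (rightC z)).map Sum.inr)
    else Part.none) := hyδ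
  rw [Lf_L0] at hyf
  by_cases hp0 : leftC z = natSet 0
  · rw [if_pos hp0] at hδ
    obtain ⟨x', hx', rfl⟩ := (Part.mem_map_iff _).mp hδ
    erw [hatprodδ, Part.mem_some_iff] at hx'
    subst hx'
    rcases hyf with ⟨w, hw, heq⟩ | ⟨w, hw, heq⟩
    · have hweq : w = _ := Sum.inl_injective heq
      rw [hweq] at hw
      have hw' : (((evalMA (leftC (rightC z))).bind CantorSp.δ).toOption,
          ((evalMA (rightC (rightC z))).bind CantorSp.δ).toOption) ∈
          (some '' {q | q ∈ Ff zeroSeq}) ×ˢ (Set.univ : Set (Option Cantor)) := hw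
      obtain ⟨h1, -⟩ := Set.mem_prod.mp hw'
      obtain ⟨a, ha, ha2⟩ := h1
      have haA : a = limA := (mem_Ff.mp ha).2
      have htoO : ((evalMA (leftC (rightC z))).bind CantorSp.δ).toOption = some a :=
        ha2.symm
      have hmem := Part.toOption_eq_some_iff.mp htoO
      obtain ⟨e, he, hee⟩ := Part.mem_bind_iff.mp hmem
      obtain ⟨hTMA, hev⟩ := he
      have hev' : eVal (leftC (rightC z)) = e := hev
      have heA : a = e := Part.mem_some_iff.mp hee
      exact Or.inl ⟨hp0, by rw [hev', ← heA, haA]⟩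
    · exact absurd heq (by simp)
  · rw [if_neg hp0] at hδ
    by_cases hp1 : leftC z = natSet 1
    · rw [if_pos hp1] at hδ
      obtain ⟨c', hc', rfl⟩ := (Part.mem_map_iff _).mp hδ
      have hcz : c' = rightC z := Part.mem_some_iff.mp hc'
      rcases hyf with ⟨w, hw, heq⟩ | ⟨w, hw, heq⟩
      · exact absurd heq (by simp)
      · have hweq := Sum.inr_injective heq
        subst hweq
        have hwC : w = limC := (mem_Hh.mp hw).2
        exact Or.inr ⟨hp1, by rw [← hcz, hwC]⟩
    · rw [if_neg hp1] at hδ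
      exact absurd hδ (Part.notMem_none _)

lemma tag_L1 {z : Cantor} {y : (Option Cantor × Option Cantor) ⊕ Cantor}
    (hyδ : y ∈ Lmfn.B.δ z)
    (hyf : y ∈ Lmfn.f ((Sum.inr zeroSeq : Cantor ⊕ Cantor), zeroSeq)) :
    (leftC z = natSet 0 ∧ eVal (rightC (rightC z)) = limB) ∨
      (leftC z = natSet 1 ∧ rightC z = limC) := by
  have hδ : y ∈ (if leftC z = natSet 0 then
      ((((RepSp.hat CantorSp).prod (RepSp.hat CantorSp)).δ (rightC z)).map Sum.inl :
        Part ((Option Cantor × Option Cantor) ⊕ Cantor))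
    else if leftC z = natSet 1 then ((Part.some (rightC z)).map Sum.inr)
    else Part.none) := hyδ
  rw [Lf_L1] at hyf
  by_cases hp0 : leftC z = natSet 0
  · rw [if_pos hp0] at hδ
    obtain ⟨x', hx', rfl⟩ := (Part.mem_map_iff _).mp hδ
    erw [hatprodδ, Part.mem_some_iff] at hx'
    subst hx'
    rcases hyf with ⟨w, hw, heq⟩ | ⟨w, hw, heq⟩
    · have hweq : w = _ := Sum.inl_injective heq
      rw [hweq] at hw
      have hw' : (((evalMA (leftC (rightC z))).bind CantorSp.δ).toOption,
          ((evalMA (rightC (rightC z))).bind CantorSp.δ).toOption) ∈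
          (Set.univ : Set (Option Cantor)) ×ˢ (some '' {q | q ∈ Gg zeroSeq}) := hw
      obtain ⟨-, h2⟩ := Set.mem_prod.mp hw'
      obtain ⟨a, ha, ha2⟩ := h2
      have haB : a = limB := (mem_Gg.mp ha).2
      have htoO : ((evalMA (rightC (rightC z))).bind CantorSp.δ).toOption = some a :=
        ha2.symm
      have hmem := Part.toOption_eq_some_iff.mp htoO
      obtain ⟨e, he, hee⟩ := Part.mem_bind_iff.mp hmem
      obtain ⟨hTMA, hev⟩ := he
      have hev' : eVal (rightC (rightC z)) = e := hev
      have heB : a = e := Part.mem_some_iff.mp hee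
      exact Or.inl ⟨hp0, by rw [hev', ← heB, haB]⟩
    · exact absurd heq (by simp)
  · rw [if_neg hp0] at hδ
    by_cases hp1 : leftC z = natSet 1
    · rw [if_pos hp1] at hδ
      obtain ⟨c', hc', rfl⟩ := (Part.mem_map_iff _).mp hδ
      have hcz : c' = rightC z := Part.mem_some_iff.mp hc'
      rcases hyf with ⟨w, hw, heq⟩ | ⟨w, hw, heq⟩
      · exact absurd heq (by simp)
      · have hweq := Sum.inr_injective heq
        subst hweq
        have hwC : w = limC := (mem_Hh.mp hw).2
        exact Or.inr ⟨hp1, by rw [← hcz, hwC]⟩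
    · rw [if_neg hp1] at hδ
      exact absurd hδ (Part.notMem_none _)

/-! #### Unpacking the composition -/

lemma comp_unpack {Φ Ψ : TuringFunctional} {G : Cantor →. Cantor} {p q : Cantor}
    (h : q ∈ pcomp Ψ.eval (pcomp G Φ.eval) p) :
    ∃ r ∈ Φ.eval p, ∃ a ∈ G r, q ∈ Ψ.eval a := by
  obtain ⟨a, ha, hq⟩ := Part.mem_bind_iff.mp h
  obtain ⟨r, hr, har⟩ := Part.mem_bind_iff.mp ha
  exact ⟨r, hr, a, har, hq⟩

lemma mem_Gadv {w0 w1 r a : Cantor} (h : a ∈ Gadv w0 w1 r) :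
    (r = rR0 ∧ a = w0) ∨ (r = rR1 ∧ a = w1) := by
  unfold Gadv at h
  by_cases h0 : r = rR0
  · rw [if_pos h0] at h
    exact Or.inl ⟨h0, Part.mem_some_iff.mp h⟩
  · rw [if_neg h0] at h
    by_cases h1 : r = rR1
    · rw [if_pos h1] at h
      exact Or.inr ⟨h1, Part.mem_some_iff.mp h⟩
    · rw [if_neg h1] at h
      exact absurd h (Part.notMem_none _)

lemma initSeg_X_Z (B C : Cantor) (s : ℕ) :
    initSeg (Xpt s B C) s = initSeg (Zpt B) s := by
  apply initSeg_congr
  intro i hi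
  unfold Xpt Zpt pairC
  split
  · show delayEnc s (inC 1 C) (i / 2) = zeroSeq (i / 2)
    rw [delayEnc_eq_false_of_lt (lt_of_le_of_lt (Nat.div_le_self i 2) hi)]
    rfl
  · rfl

end Aux

/-- Theorem 4.5: the lattice of strong Weihrauch degrees is not
distributive: there are single-valued partial functions `f, g, h` on Cantor space with
`(f ⊞ g) ⊓ h ≰_sW (f ⊓ h) ⊞ (g ⊓ h)`. -/
theorem stmt12 : ∃ F G H : Cantor →. Cantor,
    ¬ sWLe (((pfnToM F).boxplus (pfnToM G)).sqcap (pfnToM H))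
        (((pfnToM F).sqcap (pfnToM H)).boxplus ((pfnToM G).sqcap (pfnToM H))) := by
  refine ⟨Ff, Gg, Hh, ?_⟩
  show ¬ sWLe Lmfn Rmfn
  rintro ⟨Φ, Ψ, hred⟩
  -- First adversary: `Wpt limA` at `rR0`, `Zpt limB` at `rR1`.
  have hcomp1 := hred _ (realizes_Gadv valid_W valid_Z)
  obtain ⟨q1, hq1, y1, hy1δ, hy1f⟩ :=
    hcomp1 pL1 ((Sum.inr zeroSeq : Cantor ⊕ Cantor), zeroSeq) name_L1 ne_L1
  obtain ⟨r1, hr1, a1, ha1, hq1'⟩ := comp_unpack hq1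
  rcases mem_Gadv ha1 with ⟨-, rfl⟩ | ⟨-, rfl⟩
  · -- the `g`-instance is sent to the `f ⊓ h` side: the `A`-answer refutes it
    rcases tag_L1 hy1δ hy1f with ⟨-, hB⟩ | ⟨-, hC⟩
    · exact req_BW Ψ q1 hq1' hB
    · exact req_CW Ψ q1 hq1' hC
  · -- the `g`-instance is sent to the `g ⊓ h` side, answered by `Zpt limB`
    rcases tag_L1 hy1δ hy1f with ⟨htag, -⟩ | ⟨-, hC⟩
    swap
    · exact req_CZ Ψ q1 hq1' hC
    -- forced first bit `true`, converging at some stage `u`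
    have hq10 : q1 0 = true := by
      have h := congrFun htag 0
      rw [natSet_zero_zero] at h
      exact h
    obtain ⟨u, b, hub, hqb⟩ := TuringFunctional.eval_total hq1' 0
    have hb : b = true := by rw [← hqb, hq10]
    subst hb
    -- Second adversary: the `u`-delayed `C`-answer at `rR0`, `Zpt limB` at `rR1`.
    have hcomp2 := hred _ (realizes_Gadv (valid_X u) valid_Z)
    obtain ⟨q2, hq2, y2, hy2δ, hy2f⟩ :=
      hcomp2 pL0 ((Sum.inl zeroSeq : Cantor ⊕ Cantor), zeroSeq) name_L0 ne_L0
    obtain ⟨r0, hr0, a2, ha2, hq2'⟩ := comp_unpack hq2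
    rcases mem_Gadv ha2 with ⟨-, rfl⟩ | ⟨-, rfl⟩
    · -- answered by `Xpt u limB limC`
      rcases tag_L0 hy2δ hy2f with ⟨-, hA⟩ | ⟨htag1, -⟩
      · exact req_AX Ψ u q2 hq2' hA
      · -- forced first bit `false`, contradicting continuity
        have hq20 : q2 0 = false := by
          have h := congrFun htag1 0
          rw [natSet_one_zero] at h
          exact h
        have happ2 : Ψ.approx (initSeg (Xpt u limB limC) u) 0 = some true := by
          rw [initSeg_X_Z]
          exact hub
        have hbit := TuringFunctional.eval_bit hq2' happ2
        rw [hq20] at hbit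
        exact Bool.noConfusion hbit
    · -- the `f`-instance is sent to the `g ⊓ h` side: the `B`-answer refutes it
      rcases tag_L0 hy2δ hy2f with ⟨-, hA⟩ | ⟨-, hC⟩
      · exact req_AZ Ψ q2 hq2' hA
      · exact req_CZ Ψ q2 hq2' hC

end

end StrongWeihrauch
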